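/- Let A = ℝ[X,Y]/(X³Y, X²Y², Y⁴, X³−Y³). For every real number t > 0 there exists an ℝ-algebra automorphism φ of A whose induced map on 𝔫/𝔫² has determinant t. Consequently, the determinant map 𝔇₁ : Aut(A) → (0,∞) is surjective. -/

import Mathlib

/-- The Weil algebra `A = ℝ[X,Y]/(X³Y, X²Y², Y⁴, X³−Y³)`. -/
noncomputable abbrev WB : Type :=
  MvPolynomial (Fin 2) ℝ ⧸
    (Ideal.span {(MvPolynomial.X 0 : MvPolynomial (Fin 2) ℝ) ^ 3 * MvPolynomial.X 1,
      (MvPolynomial.X 0) ^ 2 * (MvPolynomial.X 1) ^ 2, (MvPolynomial.X 1) ^ 4,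
      (MvPolynomial.X 0) ^ 3 - (MvPolynomial.X 1) ^ 3} : Ideal (MvPolynomial (Fin 2) ℝ))

/-- The residue class of `X`. -/
noncomputable def bx : WB := Ideal.Quotient.mk _ (MvPolynomial.X 0)

/-- The residue class of `Y`. -/
noncomputable def bY : WB := Ideal.Quotient.mk _ (MvPolynomial.X 1)

/-- The maximal (nilpotent) ideal `𝔫 = (X, Y)` of `A`. -/
noncomputable def mIdeal : Ideal WB := Ideal.span {bx, bY}

open MvPolynomial Ideal

noncomputable def WI : Ideal (MvPolynomial (Fin 2) ℝ) :=
  Ideal.span {(MvPolynomial.X 0 : MvPolynomial (Fin 2) ℝ) ^ 3 * MvPolynomial.X 1,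
      (MvPolynomial.X 0) ^ 2 * (MvPolynomial.X 1) ^ 2, (MvPolynomial.X 1) ^ 4,
      (MvPolynomial.X 0) ^ 3 - (MvPolynomial.X 1) ^ 3}

lemma gen_mem (a : ℝ) (q : MvPolynomial (Fin 2) ℝ)
    (hq : q ∈ ({(MvPolynomial.X 0 : MvPolynomial (Fin 2) ℝ) ^ 3 * MvPolynomial.X 1,
      (MvPolynomial.X 0) ^ 2 * (MvPolynomial.X 1) ^ 2, (MvPolynomial.X 1) ^ 4,
      (MvPolynomial.X 0) ^ 3 - (MvPolynomial.X 1) ^ 3} : Set (MvPolynomial (Fin 2) ℝ))) :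
    (MvPolynomial.aeval fun i => a • MvPolynomial.X i) q ∈ WI := by
  have h0 : ∀ q' ∈ ({(MvPolynomial.X 0 : MvPolynomial (Fin 2) ℝ) ^ 3 * MvPolynomial.X 1,
      (MvPolynomial.X 0) ^ 2 * (MvPolynomial.X 1) ^ 2, (MvPolynomial.X 1) ^ 4,
      (MvPolynomial.X 0) ^ 3 - (MvPolynomial.X 1) ^ 3} : Set (MvPolynomial (Fin 2) ℝ)),
      q' ∈ WI := fun q' h => Ideal.subset_span h
  simp only [Set.mem_insert_iff, Set.mem_singleton_iff] at hq
  rcases hq with rfl | rfl | rfl | rfl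
  · have : (MvPolynomial.aeval fun i => a • MvPolynomial.X i)
        ((MvPolynomial.X 0 : MvPolynomial (Fin 2) ℝ) ^ 3 * MvPolynomial.X 1)
        = C (a^4) * ((MvPolynomial.X 0 : MvPolynomial (Fin 2) ℝ) ^ 3 * MvPolynomial.X 1) := by
      simp [smul_eq_C_mul]; ring
    rw [this]
    exact Ideal.mul_mem_left _ _ (h0 _ (by simp))
  · have : (MvPolynomial.aeval fun i => a • MvPolynomial.X i)
        ((MvPolynomial.X 0 : MvPolynomial (Fin 2) ℝ) ^ 2 * (MvPolynomial.X 1) ^ 2)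
        = C (a^4) * ((MvPolynomial.X 0 : MvPolynomial (Fin 2) ℝ) ^ 2 * (MvPolynomial.X 1) ^ 2) := by
      simp [smul_eq_C_mul]; ring
    rw [this]
    exact Ideal.mul_mem_left _ _ (h0 _ (by simp))
  · have : (MvPolynomial.aeval fun i => a • MvPolynomial.X i)
        ((MvPolynomial.X 1 : MvPolynomial (Fin 2) ℝ) ^ 4)
        = C (a^4) * ((MvPolynomial.X 1 : MvPolynomial (Fin 2) ℝ) ^ 4) := by
      simp [smul_eq_C_mul]; ring
    rw [this]
    exact Ideal.mul_mem_left _ _ (h0 _ (by simp))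
  · have : (MvPolynomial.aeval fun i => a • MvPolynomial.X i)
        ((MvPolynomial.X 0 : MvPolynomial (Fin 2) ℝ) ^ 3 - (MvPolynomial.X 1) ^ 3)
        = C (a^3) * ((MvPolynomial.X 0 : MvPolynomial (Fin 2) ℝ) ^ 3 - (MvPolynomial.X 1) ^ 3) := by
      simp [smul_eq_C_mul]; ring
    rw [this]
    exact Ideal.mul_mem_left _ _ (h0 _ (by simp))

noncomputable def scHom (a : ℝ) : WB →ₐ[ℝ] WB := by
  refine Ideal.Quotient.liftₐ WI
    ((Ideal.Quotient.mkₐ ℝ WI).comp (MvPolynomial.aeval fun i => a • MvPolynomial.X i)) ?_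
  intro p hp
  have hle : WI ≤ RingHom.ker ((Ideal.Quotient.mkₐ ℝ WI).comp
      (MvPolynomial.aeval fun i => a • MvPolynomial.X i)) := by
    rw [WI, Ideal.span_le]
    intro q hq
    simp only [SetLike.mem_coe, RingHom.mem_ker, AlgHom.coe_comp, Function.comp_apply,
      Ideal.Quotient.mkₐ_eq_mk]
    exact Ideal.Quotient.eq_zero_iff_mem.mpr (gen_mem a q hq)
  exact hle hp

lemma scHom_mk (a : ℝ) (p : MvPolynomial (Fin 2) ℝ) :
    scHom a (Ideal.Quotient.mk WI p) =
      Ideal.Quotient.mk WI ((MvPolynomial.aeval fun i => a • MvPolynomial.X i) p) := by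
  rfl

/-- For every real `t > 0` there is an ℝ-algebra automorphism `φ` of
`A = ℝ[X,Y]/(X³Y, X²Y², Y⁴, X³−Y³)` whose induced map on `𝔫/𝔫²` has determinant `t`:
namely, `φ(X) ≡ aX`, `φ(Y) ≡ aY` modulo `𝔫²` for some `a` with `a² = t` (the induced
map on `𝔫/𝔫²` is `a·Id`, of determinant `a²`).  Hence `𝔇₁ : Aut(A) → (0,∞)` is
surjective. -/
theorem stmt13 (t : ℝ) (ht : 0 < t) :
    ∃ (φ : WB ≃ₐ[ℝ] WB) (a : ℝ), a ^ 2 = t ∧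
      φ bx - a • bx ∈ mIdeal ^ 2 ∧ φ bY - a • bY ∈ mIdeal ^ 2 := by
  set a := Real.sqrt t with ha
  have ha0 : a ≠ 0 := by positivity
  have hcomp : ∀ b c : ℝ, b * c = 1 → (scHom b).comp (scHom c) = AlgHom.id ℝ WB := by
    intro b c hbc
    apply Ideal.Quotient.algHom_ext
    apply MvPolynomial.algHom_ext
    intro i
    simp only [AlgHom.comp_apply, Ideal.Quotient.mkₐ_eq_mk]
    show scHom b (scHom c (Ideal.Quotient.mk WI (X i))) = Ideal.Quotient.mk WI (X i)
    rw [scHom_mk, scHom_mk]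
    simp [smul_smul, mul_comm c b, hbc]
    rfl
  set φ : WB ≃ₐ[ℝ] WB := AlgEquiv.ofAlgHom (scHom a) (scHom a⁻¹)
    (hcomp a a⁻¹ (mul_inv_cancel₀ ha0)) (hcomp a⁻¹ a (inv_mul_cancel₀ ha0)) with hφ
  refine ⟨φ, a, Real.sq_sqrt ht.le, ?_, ?_⟩
  · have : φ bx = a • bx := by
      show scHom a bx = a • bx
      show scHom a (Ideal.Quotient.mk WI (X 0)) = a • Ideal.Quotient.mk WI (X 0)
      rw [scHom_mk, aeval_X]
      exact map_smul (Ideal.Quotient.mkₐ ℝ WI) a _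
    rw [this, sub_self]
    exact zero_mem _
  · have : φ bY = a • bY := by
      show scHom a bY = a • bY
      show scHom a (Ideal.Quotient.mk WI (X 1)) = a • Ideal.Quotient.mk WI (X 1)
      rw [scHom_mk, aeval_X]
      exact map_smul (Ideal.Quotient.mkₐ ℝ WI) a _
    rw [this, sub_self]
    exact zero_mem _
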